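/- Let K be a Galois extension of a field F with U = Gal(K/F), and let G be a subgroup of Aut(K) containing U with [G : U] = n finite. Put k = K^G, the fixed field of G. Then K is a Galois extension of k, [F : k] = n, and Gal(K/k) = G. -/

import Mathlib

set_option synthInstance.maxHeartbeats 1000000
set_option maxHeartbeats 2000000

open Polynomial Module

lemma stmt7aux_fin (k K : Type*) [Field k] [Field K] [Algebra k K]
    [Algebra.IsSeparable k K] (n : ℕ)
    (hd : ∀ x : K, IsIntegral k x ∧ (minpoly k x).natDegree ≤ n) :
    FiniteDimensional k K ∧ Module.finrank k K ≤ n := by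
  classical
  have hL : ∀ L : IntermediateField k K, FiniteDimensional k L → finrank k L ≤ n := by
    intro L hfd
    haveI := hfd
    haveI : Algebra.IsSeparable k L := Algebra.isSeparable_tower_bot_of_isSeparable k L K
    obtain ⟨α, hα⟩ := Field.exists_primitive_element k L
    have h1 : (minpoly k α).natDegree = finrank k L :=
      (Field.primitive_element_iff_minpoly_natDegree_eq k α).mp hα
    have h2 : minpoly k ((algebraMap L K) α) = minpoly k α :=
      minpoly.algebraMap_eq (algebraMap (↥L) K).injective α
    rw [← h1, ← h2]
    exact (hd (algebraMap L K α)).2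
  set V : Set ℕ := {m | ∃ L : IntermediateField k K, FiniteDimensional k L ∧ finrank k L = m}
    with hV
  have hne : V.Nonempty := ⟨finrank k (⊥ : IntermediateField k K), ⊥, inferInstance, rfl⟩
  have hbdd : BddAbove V := ⟨n, by rintro m ⟨L, hfd, rfl⟩; exact hL L hfd⟩
  obtain ⟨L₀, hfd₀, hm⟩ : sSup V ∈ V := Nat.sSup_mem hne hbdd
  haveI := hfd₀
  have htop : ∀ x : K, x ∈ L₀ := by
    intro x
    have hint : IsIntegral k x := (hd x).1
    haveI : FiniteDimensional k (IntermediateField.adjoin k {x} : IntermediateField k K) :=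
      IntermediateField.adjoin.finiteDimensional hint
    haveI : FiniteDimensional k (L₀ ⊔ IntermediateField.adjoin k {x} : IntermediateField k K) :=
      IntermediateField.finiteDimensional_sup _ _
    have hle1 : finrank k L₀ ≤ finrank k (L₀ ⊔ IntermediateField.adjoin k {x} : IntermediateField k K) :=
      LinearMap.finrank_le_finrank_of_injective
        (f := (IntermediateField.inclusion (le_sup_left :
          L₀ ≤ L₀ ⊔ IntermediateField.adjoin k {x})).toLinearMap)
        (IntermediateField.inclusion_injective le_sup_left)
    have hle2 : finrank k (L₀ ⊔ IntermediateField.adjoin k {x} : IntermediateField k K) ≤ sSup V :=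
      le_csSup hbdd ⟨_, inferInstance, rfl⟩
    have heq : L₀ = L₀ ⊔ IntermediateField.adjoin k {x} :=
      IntermediateField.eq_of_le_of_finrank_eq le_sup_left (le_antisymm hle1 (hm ▸ hle2))
    have : x ∈ L₀ ⊔ IntermediateField.adjoin k {x} :=
      (le_sup_right : IntermediateField.adjoin k {x} ≤ _)
        (IntermediateField.mem_adjoin_simple_self k x)
    rwa [← heq] at this
  have hLtop : L₀ = ⊤ := IntermediateField.ext fun x => ⟨fun _ => trivial, fun _ => htop x⟩
  subst hLtop
  have e := IntermediateField.topEquiv (F := k) (E := K)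
  constructor
  · exact FiniteDimensional.of_surjective e.toLinearMap e.surjective
  · rw [← e.toLinearEquiv.finrank_eq, hm]
    exact csSup_le hne (by rintro m ⟨L, hfd, rfl⟩; exact hL L hfd)

/-- Restriction of a ring automorphism of `K` fixing a subfield `k` to a
`k`-algebra hom from an intermediate field. -/
def stmt7res {K : Type*} [Field K] (k : Subfield K) (E : IntermediateField k K)
    (σ : K ≃+* K) (hσ : ∀ x ∈ k, σ x = x) : E →ₐ[k] K where
  toRingHom := (σ : K →+* K).comp (E.val : E →ₐ[k] K).toRingHom
  commutes' := fun c => hσ c c.2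

@[simp] lemma stmt7res_apply {K : Type*} [Field K] (k : Subfield K)
    (E : IntermediateField k K) (σ : K ≃+* K) (hσ : ∀ x ∈ k, σ x = x) (x : E) :
    stmt7res k E σ hσ x = σ x := rfl

theorem stmt_7 (K : Type*) [Field K] (F : Subfield K) [IsGalois F K]
    (U G : Subgroup (K ≃+* K))
    (hU : ∀ σ : K ≃+* K, σ ∈ U ↔ ∀ x ∈ F, σ x = x)
    (hUG : U ≤ G) (n : ℕ) (hn : 0 < n) (hidx : U.relIndex G = n)
    (k : Subfield K) (hk : ∀ x : K, x ∈ k ↔ ∀ σ ∈ G, σ x = x) :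
    IsGalois k K ∧
      (∀ σ : K ≃+* K, σ ∈ G ↔ ∀ x ∈ k, σ x = x) ∧
      ∃ hkF : k ≤ F,
        letI : Algebra k F := (Subfield.inclusion hkF).toAlgebra
        Module.finrank k F = n := by
  classical
  haveI hNorm : Normal F K := IsGalois.to_normal
  -- The quotient indexing the cosets of U in G
  let Q := G ⧸ U.subgroupOf G
  have hQcard : Nat.card Q = n := by rw [← hidx]; rfl
  haveI hQfin : Finite Q := Nat.finite_of_card_ne_zero (by rw [hQcard]; omega)
  -- every element of G decomposes as a coset rep times an element of U
  have hcover : ∀ σ : K ≃+* K, σ ∈ G →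
      ∃ (q : Q) (τ : K ≃+* K), τ ∈ U ∧
        σ = ((Quotient.out q : ↥G) : K ≃+* K) * τ := by
    intro σ hσ
    obtain ⟨h, hh⟩ := QuotientGroup.mk_out_eq_mul (U.subgroupOf G) (⟨σ, hσ⟩ : ↥G)
    refine ⟨QuotientGroup.mk (⟨σ, hσ⟩ : ↥G), (((h : ↥G)⁻¹ : ↥G) : K ≃+* K), ?_, ?_⟩
    · exact Subgroup.mem_subgroupOf.mp (inv_mem h.2)
    · have : (⟨σ, hσ⟩ : ↥G) = (Quotient.out (QuotientGroup.mk (⟨σ, hσ⟩ : ↥G) : Q)) * (h : ↥G)⁻¹ := by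
        rw [hh]; group
      have := congrArg (fun g : ↥G => (g : K ≃+* K)) this
      simpa using this
  -- the key construction : data about the minimal polynomial over k for every x
  have key : ∀ x : K, IsIntegral k x ∧ (minpoly k x).Separable ∧
      ((minpoly k x).map (algebraMap k K)).Splits ∧
      ((∀ τ ∈ U, τ x = x) → (minpoly k x).natDegree ≤ n) := by
    intro x
    have hintF : IsIntegral F x := Normal.isIntegral hNorm x
    set ι : ↥F →+* K := algebraMap F K with hι
    set P : K[X] := (minpoly F x).map ι with hP
    have hPne : P ≠ 0 := Polynomial.map_ne_zero (minpoly.ne_zero hintF)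
    set T : Set K := {y | P.IsRoot y} with hT
    have hTfin : T.Finite := Polynomial.finite_setOf_isRoot hPne
    have h0 : P.eval x = 0 := by
      rw [hP, eval_map, ← aeval_def, minpoly.aeval]
    have hUroot : ∀ τ : K ≃+* K, τ ∈ U → τ x ∈ T := by
      intro τ hτ
      have hcomm : (τ : K →+* K).comp ι = ι := RingHom.ext fun c => (hU τ).mp hτ c c.2
      have heval : P.eval (τ x) = τ (P.eval x) := by
        rw [hP, eval_map, eval_map]
        conv_lhs => rw [← hcomm]
        exact (Polynomial.hom_eval₂ (minpoly F x) ι (τ : K →+* K) x).symm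
      show P.IsRoot (τ x)
      rw [Polynomial.IsRoot.def, heval, h0, map_zero]
    set O : Set K := (fun σ : K ≃+* K => σ x) '' (G : Set (K ≃+* K)) with hO
    have hsub : O ⊆ ⋃ q : Q, (fun y => ((Quotient.out q : ↥G) : K ≃+* K) y) '' T := by
      rintro _ ⟨σ, hσ, rfl⟩
      obtain ⟨q, τ, hτU, rfl⟩ := hcover σ hσ
      exact Set.mem_iUnion.mpr ⟨q, ⟨τ x, hUroot τ hτU, rfl⟩⟩
    have hOfin : O.Finite := Set.Finite.subset (Set.finite_iUnion fun q => hTfin.image _) hsub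
    have hxO : x ∈ O := ⟨1, one_mem G, rfl⟩
    have hOcard : (∀ τ ∈ U, τ x = x) → O.ncard ≤ n := by
      intro hfix
      have hsub2 : O ⊆ Set.range (fun q : Q => ((Quotient.out q : ↥G) : K ≃+* K) x) := by
        rintro _ ⟨σ, hσ, rfl⟩
        obtain ⟨q, τ, hτU, rfl⟩ := hcover σ hσ
        refine ⟨q, ?_⟩
        show ((Quotient.out q : ↥G) : K ≃+* K) x = ((Quotient.out q : ↥G) : K ≃+* K) (τ x)
        rw [hfix τ hτU]
      calc O.ncard ≤ (Set.range (fun q : Q => ((Quotient.out q : ↥G) : K ≃+* K) x)).ncard :=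
            Set.ncard_le_ncard hsub2 (Set.finite_range _)
        _ ≤ Nat.card Q := by
            rw [← Set.ncard_univ Q, ← Set.image_univ]
            exact Set.ncard_image_le Set.finite_univ
        _ = n := hQcard
    set S : Finset K := hOfin.toFinset with hS
    have hxS : x ∈ S := (Set.Finite.mem_toFinset hOfin).mpr hxO
    set p : K[X] := ∏ y ∈ S, (X - C y) with hp
    have hmonic : p.Monic := monic_prod_of_monic _ _ fun y _ => monic_X_sub_C y
    have hstab : ∀ σ : K ≃+* K, σ ∈ G → S.image (fun y => σ y) = S := by
      intro σ hσ
      apply Finset.ext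
      intro y
      rw [Finset.mem_image]
      constructor
      · rintro ⟨z, hz, rfl⟩
        rw [Set.Finite.mem_toFinset] at hz ⊢
        obtain ⟨τ, hτ, rfl⟩ := hz
        exact ⟨σ * τ, mul_mem hσ hτ, rfl⟩
      · intro hy
        have hy' := (Set.Finite.mem_toFinset hOfin).mp hy
        obtain ⟨τ, hτ, rfl⟩ := hy'
        refine ⟨(σ⁻¹ * τ) x, ?_, ?_⟩
        · rw [Set.Finite.mem_toFinset]
          exact ⟨σ⁻¹ * τ, mul_mem (inv_mem hσ) hτ, rfl⟩
        · show σ (σ.symm (τ x)) = τ x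
          exact σ.apply_symm_apply (τ x)
    have hpmap : ∀ σ : K ≃+* K, σ ∈ G → p.map (σ : K →+* K) = p := by
      intro σ hσ
      rw [hp, Polynomial.map_prod]
      have h1 : ∀ y ∈ S, (X - C y).map (σ : K →+* K) = X - C (σ y) := by
        intro y _; rw [Polynomial.map_sub, map_X, map_C]; rfl
      rw [Finset.prod_congr rfl h1]
      calc (∏ y ∈ S, (X - C (σ y)))
          = ∏ z ∈ S.image (fun y => σ y), (X - C z) :=
            (Finset.prod_image (s := S) (g := fun y => σ y) (f := fun z => X - C z)
              (fun a _ b _ h => σ.injective h)).symm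
        _ = ∏ y ∈ S, (X - C y) := by rw [hstab σ hσ]
    have hcoeff : ∀ i, p.coeff i ∈ k := by
      intro i
      rw [hk]
      intro σ hσ
      have hcm := Polynomial.coeff_map (p := p) (σ : K →+* K) i
      rw [hpmap σ hσ] at hcm
      simpa using hcm.symm
    have hlift : p ∈ Polynomial.lifts (algebraMap k K) := by
      rw [Polynomial.lifts_iff_coeff_lifts]
      intro i; exact ⟨⟨p.coeff i, hcoeff i⟩, rfl⟩
    obtain ⟨q, hqmap, hqdeg, hqmonic⟩ := Polynomial.lifts_and_degree_eq_and_monic hlift hmonic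
    have haeval : Polynomial.aeval x q = 0 := by
      rw [Polynomial.aeval_def, ← Polynomial.eval_map, hqmap, hp, Polynomial.eval_prod]
      exact Finset.prod_eq_zero hxS (by simp)
    have hint : IsIntegral k x := ⟨q, hqmonic, by rwa [Polynomial.aeval_def] at haeval⟩
    have hdvd : minpoly k x ∣ q := minpoly.dvd k x haeval
    have hpsplits : p.Splits :=
      Polynomial.Splits.prod fun y _ => Polynomial.Splits.X_sub_C _
    have hpsep : p.Separable := by
      rw [hp]
      exact Polynomial.separable_prod_X_sub_C_iff'.mpr fun a _ b _ h => h
    have hqsep : q.Separable := by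
      have hmapsep : (q.map (algebraMap k K)).Separable := by rw [hqmap]; exact hpsep
      exact (Polynomial.separable_map _).mp hmapsep
    have hqsplits : (q.map (algebraMap k K)).Splits := by
      rw [hqmap]; exact hpsplits
    refine ⟨hint, hqsep.of_dvd hdvd,
      Polynomial.Splits.of_dvd hqsplits (Polynomial.map_ne_zero hqmonic.ne_zero) (Polynomial.map_dvd _ hdvd), ?_⟩
    intro hfix
    have h1 : (minpoly k x).natDegree ≤ q.natDegree :=
      Polynomial.natDegree_le_of_dvd hdvd hqmonic.ne_zero
    have h2 : q.natDegree = p.natDegree := by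
      have := hqdeg
      have h3 : q.degree = (q.map (algebraMap k K)).degree :=
        (Polynomial.degree_map_eq_of_injective (algebraMap k K).injective q).symm
      rw [hqmap] at h3
      exact Polynomial.natDegree_eq_of_degree_eq h3
    have h3 : p.natDegree = S.card := by
      rw [hp, Polynomial.natDegree_prod _ _ (fun y _ => Polynomial.X_sub_C_ne_zero y)]
      simp
    have h4 : S.card = O.ncard := (Set.ncard_eq_toFinset_card O hOfin).symm
    calc (minpoly k x).natDegree ≤ q.natDegree := h1
      _ = O.ncard := by rw [h2, h3, h4]
      _ ≤ n := hOcard hfix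
  haveI hNormal : Normal k K := normal_iff.mpr fun x => ⟨(key x).1, (key x).2.2.1⟩
  haveI hSep : Algebra.IsSeparable k K := ⟨fun x => (key x).2.1⟩
  haveI hGal : IsGalois k K := ⟨⟩
  -- k is contained in F
  have hkF : k ≤ F := by
    intro x hx
    have hfixU : ∀ τ ∈ U, τ x = x := fun τ hτ => (hk x).mp hx τ (hUG hτ)
    have hintF : IsIntegral F x := Normal.isIntegral hNorm x
    have hroots : ∀ y : K, Polynomial.aeval y (minpoly F x) = 0 → y = x := by
      intro y hy
      obtain ⟨σ, hσ⟩ := minpoly.exists_algEquiv_of_root' hintF.isAlgebraic hy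
      have hσU : (σ : K ≃+* K) ∈ U := by
        rw [hU]
        intro c hc
        exact σ.commutes ⟨c, hc⟩
      rw [← hσ]
      exact hfixU _ hσU
    have hsepx : (minpoly F x).Separable := Algebra.IsSeparable.isSeparable F x
    have hsplitx : ((minpoly F x).map (algebraMap F K)).Splits := Normal.splits hNorm x
    have hdeg : (minpoly F x).natDegree = 1 := by
      have hcard : (minpoly F x).natDegree = ((minpoly F x).map (algebraMap F K)).roots.card :=
        by rw [← hsplitx.natDegree_eq_card_roots, Polynomial.natDegree_map]
      have hnodup : ((minpoly F x).map (algebraMap F K)).roots.Nodup :=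
        Polynomial.nodup_roots (hsepx.map)
      have hmem : ∀ y ∈ ((minpoly F x).map (algebraMap F K)).roots, y = x := by
        intro y hy
        apply hroots
        have := Polynomial.isRoot_of_mem_roots hy
        rwa [Polynomial.IsRoot.def, Polynomial.eval_map, ← Polynomial.aeval_def] at this
      have hcle : ((minpoly F x).map (algebraMap F K)).roots.card ≤ 1 := by
        rw [← Multiset.toFinset_card_of_nodup hnodup]
        apply Finset.card_le_one.mpr
        intro a ha b hb
        rw [hmem a (Multiset.mem_toFinset.mp ha), hmem b (Multiset.mem_toFinset.mp hb)]
      have hpos : 0 < (minpoly F x).natDegree := minpoly.natDegree_pos hintF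
      omega
    have := minpoly.natDegree_eq_one_iff.mp hdeg
    obtain ⟨c, hc⟩ := this
    rw [← hc]
    exact c.2
  -- F as an intermediate field of K/k
  obtain ⟨E, hmemE⟩ : ∃ E : IntermediateField k K, ∀ x : K, x ∈ E ↔ x ∈ F :=
    ⟨F.toIntermediateField fun c => hkF c.2, fun _ => Iff.rfl⟩
  have hEfin : FiniteDimensional k E ∧ finrank k E ≤ n := by
    apply stmt7aux_fin
    intro y
    have h2 : minpoly k ((algebraMap E K) y) = minpoly k y :=
      minpoly.algebraMap_eq (algebraMap (↥E) K).injective y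
    have hyF : (y : K) ∈ F := (hmemE _).mp y.2
    have hfix : ∀ τ ∈ U, τ (y : K) = (y : K) := fun τ hτ => (hU τ).mp hτ _ hyF
    refine ⟨?_, ?_⟩
    · exact (isIntegral_algebraMap_iff (algebraMap (↥E) K).injective).mp (key (y : K)).1
    · rw [← h2]; exact (key (y : K)).2.2.2 hfix
  haveI hEfd : FiniteDimensional k E := hEfin.1
  -- counting algebra homs
  have hsplits' : ∀ y : ↥E, ((minpoly k y).map (algebraMap k K)).Splits := by
    intro y
    have h2 : minpoly k ((algebraMap E K) y) = minpoly k y :=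
      minpoly.algebraMap_eq (algebraMap (↥E) K).injective y
    rw [← h2]; exact (key _).2.2.1
  have hcardHoms : Fintype.card (E →ₐ[k] K) = finrank k E :=
    AlgHom.card_of_splits k E K hsplits'
  -- the injection from cosets to algebra homs
  have hkfix : ∀ (g : ↥G), ∀ x ∈ k, (g : K ≃+* K) x = x :=
    fun g x hx => (hk x).mp hx _ g.2
  let Φ : Q → (E →ₐ[k] K) := fun q =>
    stmt7res k E ((Quotient.out q : ↥G) : K ≃+* K) (hkfix _)
  have hΦinj : Function.Injective Φ := by
    intro q₁ q₂ h
    have happ : ∀ z ∈ F, ((Quotient.out q₁ : ↥G) : K ≃+* K) z =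
        ((Quotient.out q₂ : ↥G) : K ≃+* K) z := by
      intro z hz
      have := DFunLike.congr_fun h (⟨z, (hmemE z).mpr hz⟩ : E)
      simpa [Φ] using this
    rw [← QuotientGroup.out_eq' q₁, ← QuotientGroup.out_eq' q₂]
    rw [QuotientGroup.eq]
    rw [Subgroup.mem_subgroupOf]
    rw [hU]
    intro z hz
    have hco : (((((Quotient.out q₁ : ↥G))⁻¹ * (Quotient.out q₂ : ↥G) : ↥G)) : K ≃+* K) z
        = ((Quotient.out q₁ : ↥G) : K ≃+* K).symm (((Quotient.out q₂ : ↥G) : K ≃+* K) z) := rfl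
    rw [hco, ← happ z hz]
    exact RingEquiv.symm_apply_apply _ z
  have hcard_le : n ≤ finrank k E := by
    have := Nat.card_le_card_of_injective Φ hΦinj
    rwa [hQcard, Nat.card_eq_fintype_card, hcardHoms] at this
  have hfr : finrank k E = n := le_antisymm hEfin.2 hcard_le
  have hΦsurj : Function.Surjective Φ := by
    haveI : Fintype Q := Fintype.ofFinite Q
    have hcards : Fintype.card Q = Fintype.card (E →ₐ[k] K) := by
      rw [hcardHoms, hfr, ← hQcard, Nat.card_eq_fintype_card]
    exact ((Fintype.bijective_iff_injective_and_card Φ).mpr ⟨hΦinj, hcards⟩).2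
  -- every automorphism fixing k is in G
  have hGinv : ∀ σ : K ≃+* K, (∀ x ∈ k, σ x = x) → σ ∈ G := by
    intro σ hσfix
    obtain ⟨q, hq⟩ := hΦsurj (stmt7res k E σ hσfix)
    have hgG : ((Quotient.out q : ↥G) : K ≃+* K) ∈ G := (Quotient.out q : ↥G).2
    have happ : ∀ z ∈ F, ((Quotient.out q : ↥G) : K ≃+* K) z = σ z := by
      intro z hz
      have := DFunLike.congr_fun hq (⟨z, (hmemE z).mpr hz⟩ : E)
      simpa [Φ] using this
    have hUmem : ((Quotient.out q : ↥G) : K ≃+* K)⁻¹ * σ ∈ U := by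
      rw [hU]
      intro z hz
      show ((Quotient.out q : ↥G) : K ≃+* K).symm (σ z) = z
      rw [← happ z hz]
      exact ((Quotient.out q : ↥G) : K ≃+* K).symm_apply_apply z
    have hmul : ((Quotient.out q : ↥G) : K ≃+* K) *
        (((Quotient.out q : ↥G) : K ≃+* K)⁻¹ * σ) ∈ G := mul_mem hgG (hUG hUmem)
    simpa [mul_inv_cancel_left] using hmul
  refine ⟨hGal, fun σ => ⟨fun hσ x hx => (hk x).mp hx σ hσ, hGinv σ⟩, hkF, ?_⟩
  -- transfer the finrank statement
  letI : Algebra k F := (Subfield.inclusion hkF).toAlgebra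
  show Module.finrank k F = n
  let e : (↥F) ≃ₗ[k] ↥E :=
    { toFun := fun x => ⟨x.1, (hmemE _).mpr x.2⟩
      invFun := fun y => ⟨y.1, (hmemE _).mp y.2⟩
      left_inv := fun x => rfl
      right_inv := fun y => rfl
      map_add' := fun x y => rfl
      map_smul' := fun c x => Subtype.ext rfl }
  rw [e.finrank_eq]
  exact hfr
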